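/- An object X of a closed symmetric monoidal category is dualizable if (and only if) the canonical morphism m : X ⊗ [X, 1] → [X, X], adjoint to (id_X ⊗ ev_X) : X ⊗ [X,1] ⊗ X → X, is a split epimorphism; given a section s of m, the composite 1 → [X, X] → X ⊗ [X,1] of the name of id_X with s serves as coevaluation, with counit ev_X : [X,1] ⊗ X → 1 as evaluation. -/
import Mathlib


open CategoryTheory MonoidalCategory

universe v u

variable {C : Type u} [Category.{v} C] [MonoidalCategory C] [SymmetricCategory C]

/-- Duality data exhibiting `Xd` as a dual of `X`: evaluation, coevaluation,
and the two triangle identities. -/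
structure Dual (X Xd : C) where
  ev : Xd ⊗ X ⟶ 𝟙_ C
  coev : 𝟙_ C ⟶ X ⊗ Xd
  triangle₁ : (λ_ X).inv ≫ (coev ▷ X) ≫ (α_ X Xd X).hom ≫ (X ◁ ev) ≫ (ρ_ X).hom = 𝟙 X
  triangle₂ : (ρ_ Xd).inv ≫ (Xd ◁ coev) ≫ (α_ Xd X Xd).inv ≫ (ev ▷ Xd) ≫ (λ_ Xd).hom = 𝟙 Xd

/-- A purely monoidal computation: the "second triangle" composite, whiskered with `X`
and postcomposed with `e`, agrees with the "first triangle" composite whiskered on the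
left with `A` and postcomposed with `e`. -/
theorem aux_mono {C : Type u} [Category.{v} C] [MonoidalCategory C]
    (X A : C) (e : A ⊗ X ⟶ 𝟙_ C) (c : 𝟙_ C ⟶ X ⊗ A) :
    (((ρ_ A).inv ≫ (A ◁ c) ≫ (α_ A X A).inv ≫ (e ▷ A) ≫ (λ_ A).hom) ▷ X) ≫ e
    = (A ◁ ((λ_ X).inv ≫ (c ▷ X) ≫ (α_ X A X).hom ≫ (X ◁ e) ≫ (ρ_ X).hom)) ≫ e := by
  have claim1 : (((ρ_ A).inv ≫ (A ◁ c) ≫ (α_ A X A).inv ≫ (e ▷ A) ≫ (λ_ A).hom) ▷ X) ≫ e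
      = ((A ◁ (λ_ X).inv) ≫ (A ◁ (c ▷ X)) ≫ (A ◁ (α_ X A X).hom) ≫ (α_ A X (A ⊗ X)).inv)
        ≫ (e ▷ (A ⊗ X)) ≫ (λ_ (A ⊗ X)).hom ≫ e := by
    monoidal
  have claim2 : (A ◁ ((λ_ X).inv ≫ (c ▷ X) ≫ (α_ X A X).hom ≫ (X ◁ e) ≫ (ρ_ X).hom)) ≫ e
      = ((A ◁ (λ_ X).inv) ≫ (A ◁ (c ▷ X)) ≫ (A ◁ (α_ X A X).hom) ≫ (α_ A X (A ⊗ X)).inv)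
        ≫ ((A ⊗ X) ◁ e) ≫ (ρ_ (A ⊗ X)).hom ≫ e := by
    monoidal
  rw [claim1, claim2]
  congr 1
  rw [← leftUnitor_naturality, ← rightUnitor_naturality, whisker_exchange_assoc, unitors_equal]

/-- If the canonical morphism `m : X ⊗ [X,1] ⟶ [X,X]` (adjoint to `id_X ⊗ ev`) admits
a section `s`, then `X` is dualizable with dual `[X,1]`: the composite of the name of
`id_X` with `s` serves as coevaluation, with the counit `ev : [X,1] ⊗ X ⟶ 1` of the
tensor-hom adjunction as evaluation. -/
theorem dualizable_of_splitEpi [MonoidalClosed C] (X : C)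
    (m : X ⊗ (ihom X).obj (𝟙_ C) ⟶ (ihom X).obj X)
    (hm : m = MonoidalClosed.curry
      ((β_ X (X ⊗ (ihom X).obj (𝟙_ C))).hom ≫ (α_ X ((ihom X).obj (𝟙_ C)) X).hom ≫
        (X ◁ ((β_ ((ihom X).obj (𝟙_ C)) X).hom ≫ (ihom.ev X).app (𝟙_ C))) ≫ (ρ_ X).hom))
    (s : (ihom X).obj X ⟶ X ⊗ (ihom X).obj (𝟙_ C)) (hs : s ≫ m = 𝟙 _) :
    ∃ d : Dual X ((ihom X).obj (𝟙_ C)),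
      d.coev = MonoidalClosed.curry (ρ_ X).hom ≫ s ∧
      d.ev = (β_ ((ihom X).obj (𝟙_ C)) X).hom ≫ (ihom.ev X).app (𝟙_ C) := by
  have hcm : (MonoidalClosed.curry (ρ_ X).hom ≫ s) ≫ m = MonoidalClosed.curry (ρ_ X).hom := by
    rw [Category.assoc, hs, Category.comp_id]
  have h1 : (X ◁ (MonoidalClosed.curry (ρ_ X).hom ≫ s)) ≫
      (β_ X (X ⊗ (ihom X).obj (𝟙_ C))).hom ≫ (α_ X ((ihom X).obj (𝟙_ C)) X).hom ≫
      (X ◁ ((β_ ((ihom X).obj (𝟙_ C)) X).hom ≫ (ihom.ev X).app (𝟙_ C))) ≫ (ρ_ X).hom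
      = (ρ_ X).hom := by
    have h := congrArg MonoidalClosed.uncurry hcm
    rwa [MonoidalClosed.uncurry_natural_left, hm, MonoidalClosed.uncurry_curry,
      MonoidalClosed.uncurry_curry] at h
  have tri1 : (λ_ X).inv ≫ ((MonoidalClosed.curry (ρ_ X).hom ≫ s) ▷ X) ≫
      (α_ X ((ihom X).obj (𝟙_ C)) X).hom ≫
      (X ◁ ((β_ ((ihom X).obj (𝟙_ C)) X).hom ≫ (ihom.ev X).app (𝟙_ C))) ≫ (ρ_ X).hom
      = 𝟙 X := by
    rw [← Category.assoc, BraidedCategory.braiding_naturality_right,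
      braiding_tensorUnit_right] at h1
    simp only [Category.assoc] at h1
    apply (Iso.cancel_iso_hom_left (ρ_ X) _ _).mp
    rw [Category.comp_id]
    simpa using h1
  have tri2 : (ρ_ ((ihom X).obj (𝟙_ C))).inv ≫
      ((ihom X).obj (𝟙_ C) ◁ (MonoidalClosed.curry (ρ_ X).hom ≫ s)) ≫
      (α_ ((ihom X).obj (𝟙_ C)) X ((ihom X).obj (𝟙_ C))).inv ≫
      (((β_ ((ihom X).obj (𝟙_ C)) X).hom ≫ (ihom.ev X).app (𝟙_ C)) ▷ (ihom X).obj (𝟙_ C)) ≫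
      (λ_ ((ihom X).obj (𝟙_ C))).hom = 𝟙 ((ihom X).obj (𝟙_ C)) := by
    apply MonoidalClosed.uncurry_injective
    rw [MonoidalClosed.uncurry_id_eq_ev, MonoidalClosed.uncurry_eq]
    have hev : (ihom.ev X).app (𝟙_ C) = (β_ X ((ihom X).obj (𝟙_ C))).hom ≫
        ((β_ ((ihom X).obj (𝟙_ C)) X).hom ≫ (ihom.ev X).app (𝟙_ C)) := by
      rw [← Category.assoc, SymmetricCategory.symmetry, Category.id_comp]
    nth_rewrite 2 [hev]
    rw [← Category.assoc, BraidedCategory.braiding_naturality_right, Category.assoc,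
      aux_mono _ _ _ _ , tri1]
    simp
  exact ⟨⟨_, _, tri1, tri2⟩, rfl, rfl⟩
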